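/- Let g : ℝⁿ → ℝ be convex, x ∈ ℝⁿ, and let D(g,x) = ⋃_{t>0} {u : g(x+tu) ≤ g(x)} be the descent cone. Then the polar of the descent cone equals the cone generated by the subdifferential: [D(g,x)]° = ⋃_{t≥0} { t·z : z ∈ ∂g(x) } (assuming ∂g(x) is nonempty and does not contain 0, and taking closures as appropriate). -/

import Mathlib

open scoped RealInnerProductSpace

/-- The descent cone of a function `g` at a point `x`. -/
def descentCone {n : ℕ} (g : EuclideanSpace ℝ (Fin n) → ℝ)
    (x : EuclideanSpace ℝ (Fin n)) : Set (EuclideanSpace ℝ (Fin n)) :=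
  ⋃ t ∈ Set.Ioi (0:ℝ), {u | g (x + t • u) ≤ g x}

/-- The convex subdifferential of `g` at `x`. -/
def subdiff {n : ℕ} (g : EuclideanSpace ℝ (Fin n) → ℝ)
    (x : EuclideanSpace ℝ (Fin n)) : Set (EuclideanSpace ℝ (Fin n)) :=
  {z | ∀ y, g y ≥ g x + ⟪z, y - x⟫}

/-- The polar cone of a set. -/
def polarCone {n : ℕ} (K : Set (EuclideanSpace ℝ (Fin n))) :
    Set (EuclideanSpace ℝ (Fin n)) :=
  {z | ∀ v ∈ K, ⟪z, v⟫ ≤ 0}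

namespace PolarDescent

variable {n : ℕ}

local notation "E" => EuclideanSpace ℝ (Fin n)




/-- difference quotient -/
noncomputable def q (g : E → ℝ) (x u : E) (t : ℝ) : ℝ := (g (x + t • u) - g x) / t


lemma inner_le_q {g : E → ℝ} {x z : E} (hz : z ∈ subdiff g x) (u : E) {t : ℝ} (ht : 0 < t) :
    ⟪z, u⟫ ≤ q g x u t := by
  have h := hz (x + t • u)
  simp only [add_sub_cancel_left, real_inner_smul_right] at h
  rw [q, le_div_iff₀ ht]
  linarith

lemma q_mono {g : E → ℝ} (hg : ConvexOn ℝ Set.univ g) (x u : E) {s t : ℝ}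
    (hs : 0 < s) (hst : s ≤ t) : q g x u s ≤ q g x u t := by
  have ht : 0 < t := lt_of_lt_of_le hs hst
  have key : g (x + s • u) ≤ (1 - s / t) * g x + (s / t) * g (x + t • u) := by
    have h1 : (0:ℝ) ≤ 1 - s / t := by
      rw [sub_nonneg, div_le_one ht]; exact hst
    have h2 : (0:ℝ) ≤ s / t := le_of_lt (div_pos hs ht)
    have h3 : (1 - s / t) + s / t = 1 := by ring
    have := hg.2 (Set.mem_univ x) (Set.mem_univ (x + t • u)) h1 h2 h3
    have heq : (1 - s / t) • x + (s / t) • (x + t • u) = x + s • u := by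
      rw [smul_add, smul_smul, div_mul_cancel₀ _ (ne_of_gt ht)]
      module
    rw [heq] at this
    simpa using this
  rw [q, q, div_le_div_iff₀ hs ht]
  have h5 : g (x + s • u) - g x ≤ (s/t) * (g (x + t • u) - g x) := by nlinarith [key]
  calc (g (x + s • u) - g x) * t ≤ ((s/t) * (g (x + t • u) - g x)) * t :=
        mul_le_mul_of_nonneg_right h5 (le_of_lt ht)
    _ = (g (x + t • u) - g x) * s := by field_simp

/-- the set of difference quotients -/
def qSet (g : E → ℝ) (x u : E) : Set ℝ := q g x u '' Set.Ioi 0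

lemma qSet_nonempty (g : E → ℝ) (x u : E) : (qSet g x u).Nonempty :=
  ⟨q g x u 1, 1, Set.mem_Ioi.mpr one_pos, rfl⟩

lemma qSet_bddBelow {g : E → ℝ} {x : E} (hne : (subdiff g x).Nonempty) (u : E) :
    BddBelow (qSet g x u) := by
  obtain ⟨z, hz⟩ := hne
  exact ⟨⟪z, u⟫, by rintro r ⟨t, ht, rfl⟩; exact inner_le_q hz u (Set.mem_Ioi.mp ht)⟩

/-- the directional derivative -/
noncomputable def p (g : E → ℝ) (x u : E) : ℝ := sInf (qSet g x u)

lemma p_le_q {g : E → ℝ} {x : E} (hne : (subdiff g x).Nonempty) (u : E) {t : ℝ} (ht : 0 < t) :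
    p g x u ≤ q g x u t :=
  csInf_le (qSet_bddBelow hne u) ⟨t, ht, rfl⟩

lemma inner_le_p {g : E → ℝ} {x z : E} (hz : z ∈ subdiff g x) (u : E) :
    ⟪z, u⟫ ≤ p g x u :=
  le_csInf (qSet_nonempty g x u) (by rintro r ⟨t, ht, rfl⟩; exact inner_le_q hz u (Set.mem_Ioi.mp ht))

lemma p_zero {g : E → ℝ} {x : E} (hne : (subdiff g x).Nonempty) : p g x 0 = 0 := by
  refine le_antisymm ?_ ?_
  · have := p_le_q hne (0 : EuclideanSpace ℝ (Fin n)) one_pos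
    simpa [q] using this
  · refine le_csInf (qSet_nonempty g x 0) ?_
    rintro r ⟨t, ht, rfl⟩
    simp [q]

lemma p_add {g : E → ℝ} (hg : ConvexOn ℝ Set.univ g) {x : E} (hne : (subdiff g x).Nonempty)
    (u v : E) : p g x (u + v) ≤ p g x u + p g x v := by
  refine le_of_forall_pos_le_add (fun ε hε => ?_)
  obtain ⟨r1, ⟨t1, ht1, rfl⟩, hr1⟩ :=
    exists_lt_of_csInf_lt (qSet_nonempty g x u) (lt_add_of_pos_right (p g x u) (half_pos hε))
  obtain ⟨r2, ⟨t2, ht2, rfl⟩, hr2⟩ :=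
    exists_lt_of_csInf_lt (qSet_nonempty g x v) (lt_add_of_pos_right (p g x v) (half_pos hε))
  rw [Set.mem_Ioi] at ht1 ht2
  set t := min t1 t2 / 2 with htdef
  have ht : 0 < t := by positivity
  have h2teq : 2 * t = min t1 t2 := by rw [htdef]; ring
  have h2t1 : 2 * t ≤ t1 := by rw [h2teq]; exact min_le_left _ _
  have h2t2 : 2 * t ≤ t2 := by rw [h2teq]; exact min_le_right _ _
  have hsub : q g x (u + v) t ≤ q g x u (2 * t) + q g x v (2 * t) := by
    have hmid : x + t • (u + v) =
        (1/2 : ℝ) • (x + (2*t) • u) + (1/2 : ℝ) • (x + (2*t) • v) := by module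
    have := hg.2 (Set.mem_univ (x + (2*t) • u)) (Set.mem_univ (x + (2*t) • v))
      (by norm_num : (0:ℝ) ≤ 1/2) (by norm_num : (0:ℝ) ≤ 1/2) (by norm_num)
    rw [← hmid] at this
    simp only [smul_eq_mul] at this
    rw [q, q, q, ← add_div, div_le_div_iff₀ ht (by positivity : (0:ℝ) < 2 * t)]
    nlinarith
  have m1 : q g x u (2 * t) ≤ q g x u t1 := q_mono hg x u (by positivity) h2t1
  have m2 : q g x v (2 * t) ≤ q g x v t2 := q_mono hg x v (by positivity) h2t2
  have := p_le_q hne (u + v) ht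
  linarith

lemma p_smul_le {g : E → ℝ} {x : E} (hne : (subdiff g x).Nonempty)
    (u : E) {c : ℝ} (hc : 0 < c) : p g x (c • u) ≤ c * p g x u := by
  refine le_of_forall_pos_le_add (fun ε hε => ?_)
  obtain ⟨r, ⟨t, ht, rfl⟩, hr⟩ :=
    exists_lt_of_csInf_lt (qSet_nonempty g x u) (lt_add_of_pos_right (p g x u) (div_pos hε hc))
  rw [Set.mem_Ioi] at ht
  have hqc : q g x (c • u) (t / c) = c * q g x u t := by
    rw [q, q]
    rw [smul_smul, div_mul_cancel₀ _ (ne_of_gt hc)]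
    field_simp
  have := p_le_q hne (c • u) (div_pos ht hc)
  rw [hqc] at this
  calc p g x (c • u) ≤ c * q g x u t := this
    _ ≤ c * (p g x u + ε / c) := by nlinarith
    _ = c * p g x u + ε := by field_simp
  
lemma p_smul {g : E → ℝ} {x : E} (hne : (subdiff g x).Nonempty)
    (u : E) {c : ℝ} (hc : 0 < c) : p g x (c • u) = c * p g x u := by
  refine le_antisymm (p_smul_le hne u hc) ?_
  have := p_smul_le hne (c • u) (inv_pos.mpr hc)
  rw [smul_smul, inv_mul_cancel₀ (ne_of_gt hc), one_smul] at this
  calc c * p g x u ≤ c * (c⁻¹ * p g x (c • u)) := by nlinarith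
    _ = p g x (c • u) := by field_simp

/-- Max formula consequence: if `v` is not a descent direction, some subgradient has
nonnegative inner product with `v`. -/
lemma exists_subgrad_nonneg {g : E → ℝ} (hg : ConvexOn ℝ Set.univ g) {x : E}
    (hne : (subdiff g x).Nonempty) {v : E} (hv : ∀ t : ℝ, 0 < t → g x < g (x + t • v)) :
    ∃ z ∈ subdiff g x, 0 ≤ ⟪z, v⟫ := by
  have hv0 : v ≠ (0 : EuclideanSpace ℝ (Fin n)) := by
    rintro rfl
    simpa using hv 1 one_pos
  -- p v ≥ 0
  have hpv : 0 ≤ p g x v := by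
    refine le_csInf (qSet_nonempty g x v) ?_
    rintro r ⟨t, ht, rfl⟩
    rw [Set.mem_Ioi] at ht
    have h := hv t ht
    exact le_of_lt (div_pos (by linarith) ht)
  have hpnegv : -p g x (-v) ≤ p g x v := by
    have := p_add hg hne v (-v)
    simp only [add_neg_cancel] at this
    rw [p_zero hne] at this
    linarith
  -- Hahn-Banach extension
  have hfle : ∀ w : (LinearPMap.mkSpanSingleton (σ := RingHom.id ℝ) v (p g x v) hv0).domain,
      LinearPMap.mkSpanSingleton (σ := RingHom.id ℝ) v (p g x v) hv0 w ≤ p g x w := by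
    rintro ⟨w, hw⟩
    obtain ⟨c, rfl⟩ := Submodule.mem_span_singleton.mp hw
    have happ : LinearPMap.mkSpanSingleton (σ := RingHom.id ℝ) v (p g x v) hv0 ⟨c • v, hw⟩ = c • p g x v :=
      LinearPMap.mkSpanSingleton'_apply (R := ℝ) _ _ _ c _
    rw [happ]
    rcases lt_trichotomy c 0 with hc | hc | hc
    · have : p g x (c • v) = (-c) * p g x (-v) := by
        rw [show c • v = (-c) • (-v) by module]
        exact p_smul hne (-v) (by linarith)
      rw [this]
      simp only [smul_eq_mul]
      nlinarith
    · subst hc; simp [p_zero hne]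
    · rw [p_smul hne v hc]; simp
  obtain ⟨F, hFf, hFle⟩ := exists_extension_of_le_sublinear
    (LinearPMap.mkSpanSingleton (σ := RingHom.id ℝ) v (p g x v) hv0) (p g x)
    (fun c hc u => p_smul hne u hc) (fun u w => p_add hg hne u w) hfle
  set z : EuclideanSpace ℝ (Fin n) :=
    (InnerProductSpace.toDual ℝ _).symm (LinearMap.toContinuousLinearMap F) with hzdef
  have hzy : ∀ y, ⟪z, y⟫ = F y := fun y => by
    simp [hzdef, InnerProductSpace.toDual_symm_apply]
  have hFv : F v = p g x v := by
    have h1 := hFf ⟨v, Submodule.mem_span_singleton_self v⟩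
    rwa [LinearPMap.mkSpanSingleton_apply] at h1
  refine ⟨z, ?_, ?_⟩
  · intro y
    have h1 : F (y - x) ≤ p g x (y - x) := hFle (y - x)
    have h2 : p g x (y - x) ≤ g y - g x := by
      have h3 := p_le_q hne (y - x) one_pos
      have h4 : x + (1:ℝ) • (y - x) = y := by module
      rw [q, h4, div_one] at h3
      exact h3
    rw [ge_iff_le, hzy]
    linarith
  · rw [hzy, hFv]; exact hpv



lemma subdiff_isClosed (g : E → ℝ) (x : E) : IsClosed (subdiff g x) := by
  have : subdiff g x = ⋂ y, {z : EuclideanSpace ℝ (Fin n) | g x + ⟪z, y - x⟫ ≤ g y} := by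
    ext z; simp [subdiff, ge_iff_le]
  rw [this]
  refine isClosed_iInter fun y => ?_
  exact isClosed_le (continuous_const.add (continuous_id.inner continuous_const)) continuous_const

lemma subdiff_convex (g : E → ℝ) (x : E) : Convex ℝ (subdiff g x) := by
  intro z1 h1 z2 h2 a b ha hb hab
  intro y
  have e1 := h1 y
  have e2 := h2 y
  have : ⟪a • z1 + b • z2, y - x⟫ = a * ⟪z1, y - x⟫ + b * ⟪z2, y - x⟫ := by
    rw [inner_add_left, real_inner_smul_left, real_inner_smul_left]
  rw [ge_iff_le, this]
  have ha' : a * (g x + ⟪z1, y - x⟫) ≤ a * g y := mul_le_mul_of_nonneg_left e1 ha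
  have hb' : b * (g x + ⟪z2, y - x⟫) ≤ b * g y := mul_le_mul_of_nonneg_left e2 hb
  have hy : a * g y + b * g y = g y := by rw [← add_mul, hab, one_mul]
  have hgx : a * g x + b * g x = g x := by rw [← add_mul, hab, one_mul]
  nlinarith [ha', hb', hy, hgx]

lemma coneSet_convex {g : E → ℝ} {x : E} (hS : Convex ℝ (subdiff g x))
    (hne : (subdiff g x).Nonempty) :
    Convex ℝ {w : EuclideanSpace ℝ (Fin n) | ∃ t : ℝ, 0 ≤ t ∧ ∃ z ∈ subdiff g x, w = t • z} := by
  rintro w1 ⟨t1, ht1, z1, hz1, rfl⟩ w2 ⟨t2, ht2, z2, hz2, rfl⟩ a b ha hb hab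
  by_cases hs : a * t1 + b * t2 = 0
  · obtain ⟨z, hz⟩ := hne
    refine ⟨0, le_refl 0, z, hz, ?_⟩
    have h1 : a * t1 = 0 := by nlinarith [mul_nonneg ha ht1, mul_nonneg hb ht2]
    have h2 : b * t2 = 0 := by linarith
    rw [smul_smul, smul_smul, h1, h2]
    simp
  · set s := a * t1 + b * t2 with hsdef
    have hs0 : 0 < s := lt_of_le_of_ne (by positivity) (Ne.symm hs)
    refine ⟨s, le_of_lt hs0, (a * t1 / s) • z1 + (b * t2 / s) • z2, ?_, ?_⟩
    · refine hS hz1 hz2 (by positivity) (by positivity) ?_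
      rw [← add_div, div_self (ne_of_gt hs0)]
    · have e1 : s * (a * t1 / s) = a * t1 := by field_simp
      have e2 : s * (b * t2 / s) = b * t2 := by field_simp
      rw [smul_add, smul_smul, smul_smul, smul_smul, smul_smul, e1, e2]

end PolarDescent

/-- The polar of the descent cone is the (closed) cone generated by the
subdifferential: `[D(g,x)]° = cl ⋃_{t ≥ 0} t ∂g(x)`. -/
theorem polar_descentCone_eq_cone_subdiff {n : ℕ}
    (g : EuclideanSpace ℝ (Fin n) → ℝ) (hg : ConvexOn ℝ Set.univ g)
    (x : EuclideanSpace ℝ (Fin n))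
    (hne : (subdiff g x).Nonempty) (h0 : (0 : EuclideanSpace ℝ (Fin n)) ∉ subdiff g x) :
    polarCone (descentCone g x) =
      closure {w | ∃ t : ℝ, 0 ≤ t ∧ ∃ z ∈ subdiff g x, w = t • z} := by
  classical
  set C : Set (EuclideanSpace ℝ (Fin n)) :=
    {w | ∃ t : ℝ, 0 ≤ t ∧ ∃ z ∈ subdiff g x, w = t • z} with hC
  have hmemD : ∀ v, v ∈ descentCone g x ↔ ∃ t : ℝ, 0 < t ∧ g (x + t • v) ≤ g x := by
    intro v
    simp [descentCone, Set.mem_iUnion]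
  apply Set.Subset.antisymm
  · -- polar of descent cone ⊆ closure of cone over subdifferential
    intro w hw
    by_contra hwc
    obtain ⟨f, u, hfu, huw⟩ := geometric_hahn_banach_closed_point
      ((PolarDescent.coneSet_convex (PolarDescent.subdiff_convex g x) hne).closure)
      isClosed_closure hwc
    have h0C : (0 : EuclideanSpace ℝ (Fin n)) ∈ C := by
      obtain ⟨z, hz⟩ := hne
      exact ⟨0, le_refl 0, z, hz, by simp⟩
    have hu0 : 0 < u := by
      have := hfu 0 (subset_closure h0C)
      simpa using this
    have hfS : ∀ z ∈ subdiff g x, f z ≤ 0 := by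
      intro z hz
      by_contra hpos
      push_neg at hpos
      have htC : ((u + 1) / f z) • z ∈ C :=
        ⟨(u + 1) / f z, le_of_lt (div_pos (by linarith) hpos), z, hz, rfl⟩
      have := hfu _ (subset_closure htC)
      rw [map_smul, smul_eq_mul, div_mul_cancel₀ _ (ne_of_gt hpos)] at this
      linarith
    set v : EuclideanSpace ℝ (Fin n) := (InnerProductSpace.toDual ℝ _).symm f with hvdef
    have hvy : ∀ y, ⟪v, y⟫ = f y := fun y => by
      simp [hvdef, InnerProductSpace.toDual_symm_apply]
    obtain ⟨f0, u0, hf0, hu0'⟩ := geometric_hahn_banach_closed_point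
      (PolarDescent.subdiff_convex g x) (PolarDescent.subdiff_isClosed g x) h0
    have hu0neg : u0 < 0 := by simpa using hu0'
    set v0 : EuclideanSpace ℝ (Fin n) := (InnerProductSpace.toDual ℝ _).symm f0 with hv0def
    have hv0y : ∀ y, ⟪v0, y⟫ = f0 y := fun y => by
      simp [hv0def, InnerProductSpace.toDual_symm_apply]
    set a : ℝ := ⟪w, v⟫ with hadef
    have ha : 0 < a := by
      have h1 : ⟪v, w⟫ = f w := hvy w
      rw [hadef, real_inner_comm, h1]
      linarith
    set b : ℝ := ⟪w, v0⟫ with hbdef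
    set lam : ℝ := a / (2 * (|b| + 1)) with hlamdef
    have hb1 : (0:ℝ) < |b| + 1 := by positivity
    have hlam : 0 < lam := by positivity
    have hlamb : lam * (|b| + 1) = a / 2 := by
      rw [hlamdef]; field_simp
    set vl : EuclideanSpace ℝ (Fin n) := v + lam • v0 with hvldef
    have hwvl : 0 < ⟪w, vl⟫ := by
      have : ⟪w, vl⟫ = a + lam * b := by
        rw [hvldef, inner_add_right, real_inner_smul_right, ← hadef, ← hbdef]
      rw [this]
      nlinarith [neg_abs_le b, hlam, hlamb]
    have hvlS : ∀ z ∈ subdiff g x, ⟪z, vl⟫ < 0 := by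
      intro z hz
      have h1 : ⟪z, v⟫ ≤ 0 := by rw [real_inner_comm, hvy]; exact hfS z hz
      have h2 : ⟪z, v0⟫ < u0 := by rw [real_inner_comm, hv0y]; exact hf0 z hz
      have : ⟪z, vl⟫ = ⟪z, v⟫ + lam * ⟪z, v0⟫ := by
        rw [hvldef, inner_add_right, real_inner_smul_right]
      rw [this]
      nlinarith
    have hvlD : vl ∈ descentCone g x := by
      by_contra hnd
      rw [hmemD] at hnd
      push_neg at hnd
      obtain ⟨z, hz, hz0⟩ := PolarDescent.exists_subgrad_nonneg hg hne
        (fun t ht => hnd t ht)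
      exact absurd (hvlS z hz) (not_lt.mpr hz0)
    exact absurd (hw vl hvlD) (not_le.mpr hwvl)
  · -- closure of cone ⊆ polar of descent cone
    intro w hw v hv
    obtain ⟨t, ht, hle⟩ := (hmemD v).mp hv
    have hCsub : C ⊆ {w : EuclideanSpace ℝ (Fin n) | ⟪w, v⟫ ≤ 0} := by
      rintro _ ⟨s, hs, z, hz, rfl⟩
      have hzy := hz (x + t • v)
      rw [add_sub_cancel_left, real_inner_smul_right] at hzy
      have hzv : ⟪z, v⟫ ≤ 0 := by
        have h1 : t * ⟪z, v⟫ ≤ 0 := by linarith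
        nlinarith
      have : ⟪s • z, v⟫ = s * ⟪z, v⟫ := real_inner_smul_left z v s
      rw [Set.mem_setOf_eq, this]
      exact mul_nonpos_of_nonneg_of_nonpos hs hzv
    have hclosed : IsClosed {w : EuclideanSpace ℝ (Fin n) | ⟪w, v⟫ ≤ 0} :=
      isClosed_le (continuous_id.inner continuous_const) continuous_const
    exact closure_minimal hCsub hclosed hw
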